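/- Suppose ψ : ℝ → ℂ^N is twice differentiable, H : ℝ → Matrix (Fin N) (Fin N) ℂ is differentiable, ψ''(t) = -(i·H'(t) + H(t)²)·ψ(t) for all t, and the initial condition ψ'(0) = -i·H(0)·ψ(0) holds. Then ψ'(t) = -i·H(t)·ψ(t) for all t ≥ 0. -/

import Mathlib

open Set

lemma mulVec_norm_le {N : ℕ} (M : Matrix (Fin N) (Fin N) ℂ) (x : Fin N → ℂ) :
    ‖M.mulVec x‖ ≤ (∑ i, ∑ j, ‖M i j‖) * ‖x‖ := by
  have hc : 0 ≤ (∑ i, ∑ j, ‖M i j‖) * ‖x‖ := by positivity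
  rw [pi_norm_le_iff_of_nonneg hc]
  intro i
  calc ‖M.mulVec x i‖ = ‖∑ j, M i j * x j‖ := by
        simp [Matrix.mulVec, dotProduct]
    _ ≤ ∑ j, ‖M i j * x j‖ := norm_sum_le _ _
    _ ≤ ∑ j, ‖M i j‖ * ‖x‖ := by
        refine Finset.sum_le_sum fun j _ => ?_
        rw [norm_mul]
        exact mul_le_mul_of_nonneg_left (norm_le_pi_norm x j) (norm_nonneg _)
    _ = (∑ j, ‖M i j‖) * ‖x‖ := by rw [Finset.sum_mul]
    _ ≤ (∑ i, ∑ j, ‖M i j‖) * ‖x‖ := by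
        refine mul_le_mul_of_nonneg_right ?_ (norm_nonneg _)
        exact Finset.single_le_sum (fun k _ => Finset.sum_nonneg fun j _ => norm_nonneg _)
          (Finset.mem_univ i)

theorem stmt_4 {N : ℕ} (H H' : ℝ → Matrix (Fin N) (Fin N) ℂ)
    (ψ ψ' ψ'' : ℝ → Fin N → ℂ)
    (hH : ∀ t i j, HasDerivAt (fun s => H s i j) (H' t i j) t)
    (hψ : ∀ t, HasDerivAt ψ (ψ' t) t)
    (hψ' : ∀ t, HasDerivAt ψ' (ψ'' t) t)
    (heq : ∀ t, ψ'' t = -((Complex.I • H' t + H t ^ 2).mulVec (ψ t)))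
    (hinit : ψ' 0 = -(Complex.I • (H 0).mulVec (ψ 0))) :
    ∀ t ≥ (0 : ℝ), ψ' t = -(Complex.I • (H t).mulVec (ψ t)) := by
  intro b hb
  -- the auxiliary function T
  set T : ℝ → Fin N → ℂ := fun t => ψ' t + Complex.I • (H t).mulVec (ψ t) with hT
  -- T satisfies T' = I • H T
  have hTderiv : ∀ t, HasDerivAt T (Complex.I • (H t).mulVec (T t)) t := by
    intro t
    have key : ψ'' t + Complex.I • ((H' t).mulVec (ψ t) + (H t).mulVec (ψ' t))
        = Complex.I • (H t).mulVec (T t) := by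
      rw [heq t, hT]
      rw [Matrix.add_mulVec, Matrix.smul_mulVec, pow_two, ← Matrix.mulVec_mulVec,
        Matrix.mulVec_add, Matrix.mulVec_smul, smul_add, smul_add, smul_smul,
        Complex.I_mul_I, neg_one_smul]
      module
    rw [← key, hasDerivAt_pi]
    intro i
    have hsum : HasDerivAt (fun s => ∑ j, H s i j * ψ s j)
        (∑ j, (H' t i j * ψ t j + H t i j * ψ' t j)) t := by
      refine HasDerivAt.fun_sum fun j _ => ?_
      exact (hH t i j).mul (hasDerivAt_pi.1 (hψ t) j)
    have hd := (hasDerivAt_pi.1 (hψ' t) i).add (hsum.const_mul Complex.I)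
    have hfun : (fun s => T s i) = fun s => ψ' s i + Complex.I * ∑ j, H s i j * ψ s j := by
      funext s
      simp [hT, Matrix.mulVec, dotProduct]
    have hval : (ψ'' t + Complex.I • ((H' t).mulVec (ψ t) + (H t).mulVec (ψ' t))) i
        = ψ'' t i + Complex.I * ∑ j, (H' t i j * ψ t j + H t i j * ψ' t j) := by
      simp [Matrix.mulVec, dotProduct, Finset.sum_add_distrib, mul_add,
        Finset.mul_sum]
    rw [hfun, hval]
    exact hd
  -- T 0 = 0
  have hT0 : T 0 = 0 := by
    rw [hT]; simp only [hinit]; ext i; simp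
  -- continuity of entries gives a bound on [0, b]
  have hHc : ContinuousOn (fun s => ∑ i, ∑ j, ‖H s i j‖) (Icc 0 b) := by
    refine Continuous.continuousOn ?_
    refine continuous_finset_sum _ fun i _ => continuous_finset_sum _ fun j _ => ?_
    exact (continuous_iff_continuousAt.2 fun s => (hH s i j).continuousAt).norm
  obtain ⟨C, hC⟩ := (isCompact_Icc (a := (0:ℝ)) (b := b)).exists_bound_of_continuousOn hHc
  have hC0 : 0 ≤ C := le_trans (by positivity) (le_trans (le_abs_self _) (hC 0 ⟨le_refl _, hb⟩))
  -- projection to [0, b]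
  set π : ℝ → ℝ := fun s => max 0 (min s b) with hπ
  have hπmem : ∀ s, π s ∈ Icc (0:ℝ) b := fun s =>
    ⟨le_max_left _ _, max_le hb (min_le_right _ _)⟩
  have hπid : ∀ s ∈ Icc (0:ℝ) b, π s = s := fun s hs => by
    simp [hπ, min_eq_left hs.2, max_eq_right hs.1]
  -- the vector field
  set v : ℝ → (Fin N → ℂ) → (Fin N → ℂ) := fun s x => Complex.I • (H (π s)).mulVec x with hv
  have hlip : ∀ s, LipschitzWith C.toNNReal (v s) := by
    intro s
    refine LipschitzWith.of_dist_le_mul fun x y => ?_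
    rw [dist_eq_norm, dist_eq_norm]
    have : v s x - v s y = Complex.I • (H (π s)).mulVec (x - y) := by
      rw [hv]; simp [Matrix.mulVec_sub, smul_sub]
    rw [this, norm_smul]
    simp only [Complex.norm_I, one_mul]
    calc ‖(H (π s)).mulVec (x - y)‖ ≤ (∑ i, ∑ j, ‖H (π s) i j‖) * ‖x - y‖ :=
          mulVec_norm_le _ _
      _ ≤ C * ‖x - y‖ := by
          refine mul_le_mul_of_nonneg_right ?_ (norm_nonneg _)
          exact le_trans (le_abs_self _) (hC _ (hπmem s))
      _ = (C.toNNReal : ℝ) * ‖x - y‖ := by rw [Real.coe_toNNReal _ hC0]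
  -- uniqueness of ODE solution: T = 0 on [0, b]
  have hzero : EqOn T (fun _ => (0 : Fin N → ℂ)) (Icc 0 b) := by
    apply ODE_solution_unique hlip
    · exact fun s hs => ((hTderiv s).continuousAt).continuousWithinAt
    · intro s hs
      have hps : π s = s := hπid s ⟨hs.1, le_of_lt hs.2⟩
      have : v s (T s) = Complex.I • (H s).mulVec (T s) := by
        simp only [hv]; rw [hps]
      rw [this]
      exact (hTderiv s).hasDerivWithinAt
    · exact continuousOn_const
    · intro s hs
      have : v s (0 : Fin N → ℂ) = 0 := by rw [hv]; simp
      rw [this]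
      exact (hasDerivAt_const s (0 : Fin N → ℂ)).hasDerivWithinAt
    · exact hT0
  have hTb : T b = 0 := hzero ⟨hb, le_refl b⟩
  have := hTb
  rw [hT] at this
  have : ψ' b = -(Complex.I • (H b).mulVec (ψ b)) := by
    have h := this
    rw [add_eq_zero_iff_eq_neg] at h
    exact h
  exact this
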